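/- For each fixed s ∈ [0, 1], the map c ↦ g(c, s) is strictly decreasing on (0, ∞); that is, 0 < c₁ < c₂ implies g(c₂, s) < g(c₁, s). -/

import Mathlib

open MeasureTheory ProbabilityTheory

/-- The logistic sigmoid `S(t) = 1/(1 + exp(-t))`. -/
noncomputable def S (t : ℝ) : ℝ := 1 / (1 + Real.exp (-t))

/-- The standard Gaussian measure on `ℝ`. -/
noncomputable def γ : Measure ℝ := gaussianReal 0 1

/-- The validation mean `μᵥ(s) := √(2(1 - s²))`. -/
noncomputable def μv (s : ℝ) : ℝ := Real.sqrt (2 * (1 - s ^ 2))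

/-- `g(c, s) := -E_Z[(S(c(μᵥ(s) + s Z)) - 1)(μᵥ(s) + s Z)]` for a standard Gaussian `Z`. -/
noncomputable def g (c s : ℝ) : ℝ :=
  -∫ z, (S (c * (μv s + s * z)) - 1) * (μv s + s * z) ∂γ

/-- `σ₀(c) := sup { s ∈ [0,1] : g(c, s) ≥ 0 }`. -/
noncomputable def σ₀ (c : ℝ) : ℝ := sSup {s : ℝ | s ∈ Set.Icc (0 : ℝ) 1 ∧ 0 ≤ g c s}

instance : IsProbabilityMeasure γ := by unfold γ; infer_instance

lemma S_strictMono : StrictMono S := by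
  intro a b hab
  unfold S
  rw [div_lt_div_iff₀ (by positivity) (by positivity)]
  have : Real.exp (-b) < Real.exp (-a) := Real.exp_lt_exp.2 (by linarith)
  nlinarith [Real.exp_pos (-a), Real.exp_pos (-b)]

lemma S_pos (t : ℝ) : 0 < S t := by unfold S; positivity

lemma S_lt_one (t : ℝ) : S t < 1 := by
  unfold S
  rw [div_lt_one (by positivity)]
  linarith [Real.exp_pos (-t)]

lemma continuous_S : Continuous S := by
  apply continuous_const.div (by continuity)
  intro t
  positivity

lemma F_le {c₁ c₂ : ℝ} (h : c₁ < c₂) (x : ℝ) :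
    (S (c₁ * x) - 1) * x ≤ (S (c₂ * x) - 1) * x := by
  rcases lt_trichotomy x 0 with hx | hx | hx
  · have h1 : S (c₂ * x) < S (c₁ * x) := S_strictMono (by nlinarith)
    nlinarith
  · simp [hx]
  · have h1 : S (c₁ * x) < S (c₂ * x) := S_strictMono (by nlinarith)
    nlinarith

lemma F_lt {c₁ c₂ : ℝ} (h : c₁ < c₂) {x : ℝ} (hx : x ≠ 0) :
    (S (c₁ * x) - 1) * x < (S (c₂ * x) - 1) * x := by
  rcases hx.lt_or_gt with hx | hx
  · have h1 : S (c₂ * x) < S (c₁ * x) := S_strictMono (by nlinarith)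
    nlinarith
  · have h1 : S (c₁ * x) < S (c₂ * x) := S_strictMono (by nlinarith)
    nlinarith

lemma integrable_id_γ : Integrable (fun z : ℝ => z) γ := by
  rw [γ, gaussianReal_of_var_ne_zero 0 one_ne_zero,
    integrable_withDensity_iff (measurable_gaussianPDF 0 1)
      (ae_of_all _ fun x => ENNReal.ofReal_lt_top)]
  have h : Integrable (fun x : ℝ => (Real.sqrt (2 * Real.pi))⁻¹ *
      (x * Real.exp (-2⁻¹ * x ^ 2))) :=
    (integrable_mul_exp_neg_mul_sq (by norm_num : (0:ℝ) < 2⁻¹)).const_mul _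
  refine h.congr (ae_of_all _ fun x => ?_)
  beta_reduce
  rw [gaussianPDF, ENNReal.toReal_ofReal (gaussianPDFReal_nonneg 0 1 x)]
  simp only [gaussianPDFReal, sub_zero, NNReal.coe_one, mul_one]
  ring_nf

lemma integrable_X (s : ℝ) : Integrable (fun z : ℝ => μv s + s * z) γ :=
  (integrable_const (μv s)).add (integrable_id_γ.const_mul s)

lemma integrable_F (c s : ℝ) :
    Integrable (fun z : ℝ => (S (c * (μv s + s * z)) - 1) * (μv s + s * z)) γ := by
  refine (integrable_X s).mono ?_ (ae_of_all _ fun z => ?_)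
  · exact (Continuous.aestronglyMeasurable (by
      exact ((continuous_S.comp (continuous_const.mul
        (continuous_const.add (continuous_const.mul continuous_id)))).sub
        continuous_const).mul
        (continuous_const.add (continuous_const.mul continuous_id))))
  · have h1 := S_pos (c * (μv s + s * z))
    have h2 := S_lt_one (c * (μv s + s * z))
    rw [Real.norm_eq_abs, Real.norm_eq_abs, abs_mul]
    have : |S (c * (μv s + s * z)) - 1| ≤ 1 := by
      rw [abs_le]; constructor <;> linarith
    nlinarith [abs_nonneg (μv s + s * z), abs_nonneg (S (c * (μv s + s * z)) - 1)]

/-- For each fixed `s ∈ [0, 1]`, the map `c ↦ g(c, s)` is strictly decreasing on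
`(0, ∞)`: `0 < c₁ < c₂` implies `g(c₂, s) < g(c₁, s)`. -/
theorem stmt14 (s : ℝ) (hs : s ∈ Set.Icc (0 : ℝ) 1) (c₁ c₂ : ℝ)
    (hc₁ : 0 < c₁) (hc : c₁ < c₂) : g c₂ s < g c₁ s := by
  obtain ⟨hs0, hs1⟩ := hs
  set F : ℝ → ℝ → ℝ := fun c z => (S (c * (μv s + s * z)) - 1) * (μv s + s * z) with hF
  set D : ℝ → ℝ := fun z => F c₂ z - F c₁ z with hD
  have hD0 : ∀ z, 0 ≤ D z := fun z => sub_nonneg.2 (F_le hc _)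
  have hDpos : ∀ z, μv s + s * z ≠ 0 → 0 < D z := fun z hz => sub_pos.2 (F_lt hc hz)
  have hDint : Integrable D γ := (integrable_F c₂ s).sub (integrable_F c₁ s)
  -- zero set is null
  have hzero : γ {z : ℝ | μv s + s * z = 0} = 0 := by
    rcases eq_or_lt_of_le hs0 with h | h
    · have hμ : μv s = Real.sqrt 2 := by rw [← h]; simp [μv]
      have : {z : ℝ | μv s + s * z = 0} = ∅ := by
        ext z
        simp only [Set.mem_setOf_eq, Set.mem_empty_iff_false, iff_false]
        rw [hμ, ← h]
        have : (0:ℝ) < Real.sqrt 2 := Real.sqrt_pos.2 (by norm_num)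
        intro hcon; nlinarith
      simp [this]
    · have hsub : {z : ℝ | μv s + s * z = 0} ⊆ {-μv s / s} := by
        intro z hz
        simp only [Set.mem_setOf_eq] at hz
        simp only [Set.mem_singleton_iff]
        field_simp
        linarith
      refine le_antisymm ?_ zero_le
      calc γ {z : ℝ | μv s + s * z = 0} ≤ γ {-μv s / s} := measure_mono hsub
        _ = 0 := (gaussianReal_absolutelyContinuous 0 one_ne_zero)
            (MeasureTheory.measure_singleton _)
  have hmeas : MeasurableSet {z : ℝ | μv s + s * z = 0} := by
    have : Continuous (fun z : ℝ => μv s + s * z) := by continuity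
    exact this.measurable (measurableSet_singleton 0)
  have hcompl : γ {z : ℝ | μv s + s * z = 0}ᶜ = 1 := by
    rw [measure_compl hmeas (measure_ne_top _ _), hzero, measure_univ]
    simp
  have hsupp : {z : ℝ | μv s + s * z = 0}ᶜ ⊆ Function.support D := by
    intro z hz
    exact (hDpos z hz).ne'
  have hpos : 0 < ∫ z, D z ∂γ := by
    rw [integral_pos_iff_support_of_nonneg_ae (ae_of_all _ hD0) hDint]
    calc (0:ENNReal) < 1 := by norm_num
      _ = γ {z : ℝ | μv s + s * z = 0}ᶜ := hcompl.symm
      _ ≤ γ (Function.support D) := measure_mono hsupp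
  have hsub : ∫ z, D z ∂γ = (∫ z, F c₂ z ∂γ) - ∫ z, F c₁ z ∂γ :=
    integral_sub (integrable_F c₂ s) (integrable_F c₁ s)
  have : (∫ z, F c₁ z ∂γ) < ∫ z, F c₂ z ∂γ := by linarith
  unfold g
  simpa [hF] using neg_lt_neg this
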